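/- arXiv:1011.1939 — 3 statements merged into one kernel-verified Lean document; each statement's English description precedes it below -/
import Mathlib

section
/- The Pairwise Partitioning Rule maps a connected N-partition to a connected N-partition: if P is a connected N-partition and regions P_i, P_j are replaced by the two Voronoi-type cells W_{a*}, W_{b*} of U = P_i ∪ P_j determined by a pair (a*, b*) ∈ U × U with a* ≠ b*, then the resulting collection is again a connected N-partition (the two new cells are nonempty, disjoint, cover U, and each induces a connected subgraph). -/
open scoped Classical ENNReal

noncomputable section

variable {V : Type*}

/-- Weighted length of a walk. -/
def wlen (w : V → V → ℝ≥0∞) {G : SimpleGraph V} {u v : V} (p : G.Walk u v) : ℝ≥0∞ :=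
  (p.darts.map fun d => w d.fst d.snd).sum

/-- Shortest weighted path distance in a graph (`⊤` if no path). -/
def gdist (G : SimpleGraph V) (w : V → V → ℝ≥0∞) (u v : V) : ℝ≥0∞ :=
  ⨅ p : G.Walk u v, wlen w p

/-- Distance in the subgraph induced on `A`. -/
def sdist (G : SimpleGraph V) (w : V → V → ℝ≥0∞) (A : Set V) (u v : A) : ℝ≥0∞ :=
  gdist (G.induce A) (fun a b => w a.1 b.1) u v

/-- Distance in the induced subgraph, as a function on `V` (`⊤` off `A`). -/
def dIn (G : SimpleGraph V) (w : V → V → ℝ≥0∞) (A : Set V) (u v : V) : ℝ≥0∞ :=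
  if h : u ∈ A ∧ v ∈ A then sdist G w A ⟨u, h.1⟩ ⟨v, h.2⟩ else ⊤

/-- One-center coverage cost of region `A` from vertex `h`. -/
def HoneV (G : SimpleGraph V) (w : V → V → ℝ≥0∞) (φ : V → ℝ≥0∞) (A : Set V) (h : V) : ℝ≥0∞ :=
  ∑ᶠ k ∈ A, dIn G w A h k * φ k

/-- Set of minimizers of the one-center cost over `A`. -/
def centerSet (G : SimpleGraph V) (w : V → V → ℝ≥0∞) (φ : V → ℝ≥0∞) (A : Set V) : Set V :=
  {h | h ∈ A ∧ ∀ k ∈ A, HoneV G w φ A h ≤ HoneV G w φ A k}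

/-- Generalized centroid: least element of the argmin set. -/
def Cd [Fintype V] [LinearOrder V] [Nonempty V] (G : SimpleGraph V) (w : V → V → ℝ≥0∞)
    (φ : V → ℝ≥0∞) (A : Set V) : V :=
  if hne : (centerSet G w φ A).toFinset.Nonempty then (centerSet G w φ A).toFinset.min' hne
  else Classical.arbitrary V

namespace StmtAux
open SimpleGraph

lemma wlen_nil {G : SimpleGraph V} (w : V → V → ℝ≥0∞) (u : V) :
    wlen w (Walk.nil : G.Walk u u) = 0 := by simp [wlen]

lemma wlen_cons {G : SimpleGraph V} (w : V → V → ℝ≥0∞) {u v x : V} (h : G.Adj u v)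
    (p : G.Walk v x) : wlen w (Walk.cons h p) = w u v + wlen w p := by
  simp [wlen]

lemma wlen_append {G : SimpleGraph V} (w : V → V → ℝ≥0∞) {u v x : V}
    (p : G.Walk u v) (q : G.Walk v x) :
    wlen w (p.append q) = wlen w p + wlen w q := by
  simp [wlen, Walk.darts_append]

lemma gdist_le {G : SimpleGraph V} (w : V → V → ℝ≥0∞) {u v : V} (p : G.Walk u v) :
    gdist G w u v ≤ wlen w p := iInf_le _ _

lemma gdist_self (G : SimpleGraph V) (w : V → V → ℝ≥0∞) (u : V) :
    gdist G w u u = 0 :=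
  le_antisymm (by simpa [wlen_nil] using gdist_le w (Walk.nil : G.Walk u u)) zero_le

lemma gdist_triangle (G : SimpleGraph V) (w : V → V → ℝ≥0∞) (u x v : V) :
    gdist G w u v ≤ gdist G w u x + gdist G w x v := by
  have h1 : gdist G w u x + gdist G w x v
      = ⨅ p : G.Walk u x, ⨅ q : G.Walk x v, (wlen w p + wlen w q) := by
    rw [gdist, ENNReal.iInf_add]
    exact iInf_congr fun p => by rw [gdist, ENNReal.add_iInf]
  rw [h1]
  refine le_iInf fun p => le_iInf fun q => ?_
  calc gdist G w u v ≤ wlen w (p.append q) := gdist_le w _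
    _ = wlen w p + wlen w q := wlen_append w p q

lemma wlen_bypass_le {V' : Type*} [DecidableEq V'] {H : SimpleGraph V'}
    (w' : V' → V' → ℝ≥0∞) {u v : V'} (p : H.Walk u v) :
    wlen w' p.bypass ≤ wlen w' p := by
  induction p with
  | nil => simp [Walk.bypass]
  | @cons u y v h q ih =>
    rw [Walk.bypass]
    split_ifs with hs
    · calc wlen w' (q.bypass.dropUntil _ hs) ≤ wlen w' q.bypass := by
            conv_rhs => rw [← q.bypass.take_spec hs]
            rw [wlen_append]; exact le_add_self
        _ ≤ wlen w' q := ih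
        _ ≤ wlen w' (Walk.cons h q) := by rw [wlen_cons]; exact le_add_self
    · rw [wlen_cons, wlen_cons]; exact add_le_add le_rfl ih

lemma exists_shortest {V' : Type*} [Fintype V'] (H : SimpleGraph V')
    (w' : V' → V' → ℝ≥0∞) {u v : V'} (h : H.Reachable u v) :
    ∃ p : H.Walk u v, p.IsPath ∧ wlen w' p = gdist H w' u v := by
  have hq : Nonempty (H.Path u v) := ⟨(Classical.choice h).toPath⟩
  obtain ⟨p, hp⟩ := Finite.exists_min (fun p : H.Path u v => wlen w' p.1)
  refine ⟨p.1, p.2, le_antisymm ?_ (gdist_le w' _)⟩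
  refine le_iInf fun q => ?_
  calc wlen w' p.1 ≤ wlen w' (q.toPath : H.Walk u v) := hp q.toPath
    _ ≤ wlen w' q := wlen_bypass_le w' q

lemma gdist_ne_zero {V' : Type*} [Fintype V'] (H : SimpleGraph V')
    (w' : V' → V' → ℝ≥0∞) (hpos : ∀ u v, H.Adj u v → 0 < w' u v)
    {u v : V'} (huv : u ≠ v) : gdist H w' u v ≠ 0 := by
  by_cases h : H.Reachable u v
  · obtain ⟨p, _, hp⟩ := exists_shortest H w' h
    rw [← hp]
    cases p with
    | nil => exact absurd rfl huv
    | cons hadj q =>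
      rw [wlen_cons]
      exact fun h0 => absurd ((add_eq_zero.mp h0).1) (hpos _ _ hadj).ne'
  · have : IsEmpty (H.Walk u v) := ⟨fun p => h ⟨p⟩⟩
    rw [gdist, iInf_of_empty]
    exact ENNReal.top_ne_zero

lemma wlen_ne_top {G : SimpleGraph V} (w : V → V → ℝ≥0∞)
    (hpos : ∀ u v, G.Adj u v → w u v ≠ ⊤) {u v : V} (p : G.Walk u v) :
    wlen w p ≠ ⊤ := by
  induction p with
  | nil => simp [wlen_nil]
  | cons h q ih => rw [wlen_cons]; exact ENNReal.add_ne_top.mpr ⟨hpos _ _ h, ih⟩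

/-- inclusion hom between induced subgraphs -/
def homIncl (G : SimpleGraph V) {A B : Set V} (hAB : A ⊆ B) :
    G.induce A →g G.induce B :=
  ⟨fun x => ⟨x.1, hAB x.2⟩, fun h => h⟩

lemma connected_union_adj (G : SimpleGraph V) {A B : Set V}
    (hA : (G.induce A).Connected) (hB : (G.induce B).Connected)
    {x y : V} (hx : x ∈ A) (hy : y ∈ B) (hxy : G.Adj x y) :
    (G.induce (A ∪ B)).Connected := by
  have hxU : x ∈ A ∪ B := Or.inl hx
  have key : ∀ z : ↥(A ∪ B), (G.induce (A ∪ B)).Reachable z ⟨x, hxU⟩ := by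
    rintro ⟨z, hz | hz⟩
    · exact (hA.preconnected ⟨z, hz⟩ ⟨x, hx⟩).map (homIncl G Set.subset_union_left)
    · refine ((hB.preconnected ⟨z, hz⟩ ⟨y, hy⟩).map
        (homIncl G Set.subset_union_right)).trans ?_
      exact (Adj.reachable (by exact hxy.symm : (G.induce (A ∪ B)).Adj ⟨y, Or.inr hy⟩ ⟨x, hxU⟩))
  exact (SimpleGraph.connected_iff _).mpr ⟨fun u v => (key u).trans (key v).symm, ⟨⟨x, hxU⟩⟩⟩

lemma reachable_induce_of_support (G : SimpleGraph V) {A B : Set V} (hAB : A ⊆ B)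
    {u v : ↥B} (p : (G.induce B).Walk u v) (hs : ∀ y ∈ p.support, (y : V) ∈ A) :
    (G.induce A).Reachable ⟨u.1, hs u p.start_mem_support⟩ ⟨v.1, hs v p.end_mem_support⟩ := by
  induction p with
  | nil => exact Reachable.refl _
  | @cons u y v h q ih =>
    have hu : (u : V) ∈ A := hs u (by simp)
    have hy : (y : V) ∈ A := hs y (by simp [Walk.support_cons])
    have hadj : (G.induce A).Adj ⟨u.1, hu⟩ ⟨y.1, hy⟩ := h
    exact (hadj.reachable).trans (ih fun z hz => hs z (by simp [Walk.support_cons, hz]))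

end StmtAux

namespace StmtAux
open SimpleGraph

lemma dIn_eq (G : SimpleGraph V) (w : V → V → ℝ≥0∞) {U : Set V} {x y : V}
    (hx : x ∈ U) (hy : y ∈ U) :
    dIn G w U x y = gdist (G.induce U) (fun a b => w a.1 b.1) ⟨x, hx⟩ ⟨y, hy⟩ := by
  rw [dIn, dif_pos ⟨hx, hy⟩]; rfl


/-- every vertex on a shortest walk to `a` stays on `a`'s side (weak ineq). -/
lemma support_side_a {V' : Type*} (H : SimpleGraph V') (w' : V' → V' → ℝ≥0∞)
    (hne : ∀ u v, H.Adj u v → w' u v ≠ ⊤) {x a b : V'} (p : H.Walk x a)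
    (hp : wlen w' p = gdist H w' x a) (hx : gdist H w' x a ≤ gdist H w' x b)
    {y : V'} (hy : y ∈ p.support) : gdist H w' y a ≤ gdist H w' y b := by
  by_contra hcon
  push_neg at hcon
  have hsplit : wlen w' (p.takeUntil y hy) + wlen w' (p.dropUntil y hy) = wlen w' p := by
    rw [← wlen_append, p.take_spec hy]
  have hwne : wlen w' p ≠ ⊤ := wlen_ne_top w' hne p
  have hfin : gdist H w' x y ≠ ⊤ := by
    refine ne_top_of_le_ne_top hwne ?_
    calc gdist H w' x y ≤ wlen w' (p.takeUntil y hy) := gdist_le w' _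
      _ ≤ wlen w' (p.takeUntil y hy) + wlen w' (p.dropUntil y hy) := le_self_add
      _ = wlen w' p := hsplit
  have : gdist H w' x a < gdist H w' x a := by
    calc gdist H w' x a ≤ gdist H w' x b := hx
      _ ≤ gdist H w' x y + gdist H w' y b := gdist_triangle H w' x y b
      _ < gdist H w' x y + gdist H w' y a := ENNReal.add_lt_add_left hfin hcon
      _ ≤ wlen w' (p.takeUntil y hy) + wlen w' (p.dropUntil y hy) :=
          add_le_add (gdist_le w' _) (gdist_le w' _)
      _ = wlen w' p := hsplit
      _ = gdist H w' x a := hp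
  exact lt_irrefl _ this

/-- every vertex on a shortest walk to `b` stays on `b`'s side (strict ineq). -/
lemma support_side_b {V' : Type*} (H : SimpleGraph V') (w' : V' → V' → ℝ≥0∞)
    {x a b : V'} (p : H.Walk x b)
    (hp : wlen w' p = gdist H w' x b) (hx : gdist H w' x b < gdist H w' x a)
    {y : V'} (hy : y ∈ p.support) : gdist H w' y b < gdist H w' y a := by
  by_contra hcon
  push_neg at hcon
  have hsplit : wlen w' (p.takeUntil y hy) + wlen w' (p.dropUntil y hy) = wlen w' p := by
    rw [← wlen_append, p.take_spec hy]
  have : gdist H w' x a < gdist H w' x a := by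
    calc gdist H w' x a ≤ gdist H w' x y + gdist H w' y a := gdist_triangle H w' x y a
      _ ≤ gdist H w' x y + gdist H w' y b := add_le_add le_rfl hcon
      _ ≤ wlen w' (p.takeUntil y hy) + wlen w' (p.dropUntil y hy) :=
          add_le_add (gdist_le w' _) (gdist_le w' _)
      _ = wlen w' p := hsplit
      _ = gdist H w' x b := hp
      _ < gdist H w' x a := hx
  exact lt_irrefl _ this

lemma conn_Wa [Fintype V] (G : SimpleGraph V) (w : V → V → ℝ≥0∞)
    (hpos : ∀ u v, G.Adj u v → 0 < w u v ∧ w u v ≠ ⊤) {U : Set V}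
    (hU : (G.induce U).Connected) {a b : V} (ha : a ∈ U) (hb : b ∈ U) :
    (G.induce {x | x ∈ U ∧ dIn G w U x a ≤ dIn G w U x b}).Connected := by
  have haW : a ∈ {x | x ∈ U ∧ dIn G w U x a ≤ dIn G w U x b} := by
    refine ⟨ha, ?_⟩
    rw [dIn_eq G w ha ha, gdist_self]
    exact zero_le
  have key : ∀ x (hx : x ∈ {x | x ∈ U ∧ dIn G w U x a ≤ dIn G w U x b}),
      (G.induce {x | x ∈ U ∧ dIn G w U x a ≤ dIn G w U x b}).Reachable ⟨x, hx⟩ ⟨a, haW⟩ := by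
    intro x hx
    have hr : (G.induce U).Reachable ⟨x, hx.1⟩ ⟨a, ha⟩ := hU.preconnected _ _
    obtain ⟨p, -, hp⟩ := exists_shortest (G.induce U) (fun a b => w a.1 b.1) hr
    have hxle : gdist (G.induce U) (fun a b => w a.1 b.1) ⟨x, hx.1⟩ ⟨a, ha⟩
        ≤ gdist (G.induce U) (fun a b => w a.1 b.1) ⟨x, hx.1⟩ ⟨b, hb⟩ := by
      rw [← dIn_eq G w hx.1 ha, ← dIn_eq G w hx.1 hb]; exact hx.2
    have hs : ∀ y ∈ p.support, (y : ↥U).1 ∈ {x | x ∈ U ∧ dIn G w U x a ≤ dIn G w U x b} := by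
      intro y hy
      refine ⟨y.2, ?_⟩
      rw [dIn_eq G w y.2 ha, dIn_eq G w y.2 hb]
      exact support_side_a (G.induce U) (fun a b => w a.1 b.1)
        (fun u v h => (hpos u.1 v.1 h).2) p hp hxle hy
    exact reachable_induce_of_support G (fun z hz => hz.1) p hs
  exact (SimpleGraph.connected_iff _).mpr
    ⟨fun u v => (key u u.2).trans (key v v.2).symm, ⟨⟨a, haW⟩⟩⟩

lemma conn_Wb [Fintype V] (G : SimpleGraph V) (w : V → V → ℝ≥0∞)
    (hpos : ∀ u v, G.Adj u v → 0 < w u v ∧ w u v ≠ ⊤) {U : Set V}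
    (hU : (G.induce U).Connected) {a b : V} (ha : a ∈ U) (hb : b ∈ U)
    (hab : a ≠ b) :
    (G.induce (U \ {x | x ∈ U ∧ dIn G w U x a ≤ dIn G w U x b})).Connected := by
  have hmem : ∀ x, x ∈ U \ {x | x ∈ U ∧ dIn G w U x a ≤ dIn G w U x b}
      ↔ x ∈ U ∧ dIn G w U x b < dIn G w U x a := by
    intro x
    constructor
    · rintro ⟨hxU, hx⟩
      exact ⟨hxU, not_le.mp fun h => hx ⟨hxU, h⟩⟩
    · rintro ⟨hxU, hx⟩
      exact ⟨hxU, fun h => absurd h.2 (not_le.mpr hx)⟩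
  have hbW : b ∈ U \ {x | x ∈ U ∧ dIn G w U x a ≤ dIn G w U x b} := by
    refine (hmem b).mpr ⟨hb, ?_⟩
    rw [dIn_eq G w hb hb, dIn_eq G w hb ha, gdist_self]
    refine pos_iff_ne_zero.mpr ?_
    exact gdist_ne_zero _ _ (fun u v h => (hpos u.1 v.1 h).1)
      (fun h => hab (congrArg Subtype.val h).symm)
  have key : ∀ x (hx : x ∈ U \ {x | x ∈ U ∧ dIn G w U x a ≤ dIn G w U x b}),
      (G.induce (U \ {x | x ∈ U ∧ dIn G w U x a ≤ dIn G w U x b})).Reachable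
        ⟨x, hx⟩ ⟨b, hbW⟩ := by
    intro x hx
    obtain ⟨hxU, hxlt⟩ := (hmem x).mp hx
    have hr : (G.induce U).Reachable ⟨x, hxU⟩ ⟨b, hb⟩ := hU.preconnected _ _
    obtain ⟨p, -, hp⟩ := exists_shortest (G.induce U) (fun a b => w a.1 b.1) hr
    have hxle : gdist (G.induce U) (fun a b => w a.1 b.1) ⟨x, hxU⟩ ⟨b, hb⟩
        < gdist (G.induce U) (fun a b => w a.1 b.1) ⟨x, hxU⟩ ⟨a, ha⟩ := by
      rw [← dIn_eq G w hxU ha, ← dIn_eq G w hxU hb]; exact hxlt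
    have hs : ∀ y ∈ p.support,
        (y : ↥U).1 ∈ U \ {x | x ∈ U ∧ dIn G w U x a ≤ dIn G w U x b} := by
      intro y hy
      refine (hmem _).mpr ⟨y.2, ?_⟩
      rw [dIn_eq G w y.2 ha, dIn_eq G w y.2 hb]
      exact support_side_b (G.induce U) (fun a b => w a.1 b.1) p hp hxle hy
    exact reachable_induce_of_support G (fun z hz => hz.1) p hs
  exact (SimpleGraph.connected_iff _).mpr
    ⟨fun u v => (key u u.2).trans (key v v.2).symm, ⟨⟨b, hbW⟩⟩⟩

end StmtAux

/-- The Pairwise Partitioning Rule maps a connected N-partition to a connected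
N-partition. -/
theorem stmt7 [Fintype V] (G : SimpleGraph V) (hG : G.Connected)
    (w : V → V → ℝ≥0∞) (hsym : ∀ u v, w u v = w v u)
    (hpos : ∀ u v, G.Adj u v → 0 < w u v ∧ w u v ≠ ⊤)
    (N : ℕ) (P : Fin N → Set V)
    (hcover : (⋃ i, P i) = Set.univ)
    (hdisj : ∀ i j, i ≠ j → Disjoint (P i) (P j))
    (hne : ∀ i, (P i).Nonempty)
    (hconn : ∀ i, (G.induce (P i)).Connected)
    (i j : Fin N) (hij : i ≠ j)
    (hadj : ∃ qi ∈ P i, ∃ qj ∈ P j, G.Adj qi qj)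
    (a b : V) (ha : a ∈ P i ∪ P j) (hb : b ∈ P i ∪ P j) (hab : a ≠ b) :
    let U := P i ∪ P j
    let Wa := {x | x ∈ U ∧ dIn G w U x a ≤ dIn G w U x b}
    let Wb := U \ Wa
    let P' := Function.update (Function.update P i Wa) j Wb
    ((⋃ k, P' k) = Set.univ) ∧
    (∀ k l, k ≠ l → Disjoint (P' k) (P' l)) ∧
    (∀ k, (P' k).Nonempty) ∧
    (∀ k, (G.induce (P' k)).Connected) := by
  intro U Wa Wb P'
  have ha' : a ∈ U := ha
  have hb' : b ∈ U := hb
  have hUconn : (G.induce U).Connected := by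
    obtain ⟨qi, hqi, qj, hqj, hq⟩ := hadj
    exact StmtAux.connected_union_adj G (hconn i) (hconn j) hqi hqj hq
  have haWa : a ∈ Wa :=
    ⟨ha', by rw [StmtAux.dIn_eq G w ha' ha', StmtAux.gdist_self]; exact zero_le⟩
  have hba0 : dIn G w U b a ≠ 0 := by
    rw [StmtAux.dIn_eq G w hb' ha']
    exact StmtAux.gdist_ne_zero _ _ (fun u v h => (hpos u.1 v.1 h).1)
      (fun h => hab (congrArg Subtype.val h).symm)
  have hbb0 : dIn G w U b b = 0 := by
    rw [StmtAux.dIn_eq G w hb' hb', StmtAux.gdist_self]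
  have hbWb : b ∈ Wb :=
    ⟨hb', fun hmem => hba0 (le_antisymm (hbb0 ▸ hmem.2) zero_le)⟩
  have hWaU : Wa ⊆ U := fun x hx => hx.1
  have hWbU : Wb ⊆ U := fun x hx => hx.1
  have hP'i : P' i = Wa := by
    show Function.update (Function.update P i Wa) j Wb i = Wa
    rw [Function.update_of_ne hij, Function.update_self]
  have hP'j : P' j = Wb := Function.update_self _ _ _
  have hP'k : ∀ k, k ≠ i → k ≠ j → P' k = P k := by
    intro k hki hkj
    show Function.update (Function.update P i Wa) j Wb k = P k
    rw [Function.update_of_ne hkj, Function.update_of_ne hki]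
  have hDU : ∀ m, m ≠ i → m ≠ j → Disjoint (P m) U := by
    intro m h1 h2
    exact Set.disjoint_union_right.mpr ⟨hdisj m i h1, hdisj m j h2⟩
  refine ⟨?_, ?_, ?_, ?_⟩
  · -- cover
    apply Set.eq_univ_of_forall
    intro x
    have : x ∈ ⋃ k, P k := hcover ▸ Set.mem_univ x
    obtain ⟨k, hk⟩ := Set.mem_iUnion.mp this
    by_cases hki : k = i
    · subst hki
      by_cases hxa : x ∈ Wa
      · exact Set.mem_iUnion.mpr ⟨k, hP'i ▸ hxa⟩
      · exact Set.mem_iUnion.mpr ⟨j, hP'j ▸ ⟨Or.inl hk, hxa⟩⟩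
    · by_cases hkj : k = j
      · subst hkj
        by_cases hxa : x ∈ Wa
        · exact Set.mem_iUnion.mpr ⟨i, hP'i ▸ hxa⟩
        · exact Set.mem_iUnion.mpr ⟨k, hP'j ▸ ⟨Or.inr hk, hxa⟩⟩
      · exact Set.mem_iUnion.mpr ⟨k, (hP'k k hki hkj) ▸ hk⟩
  · -- disjoint
    intro k l hkl
    by_cases hki : k = i
    · subst hki
      rw [hP'i]
      by_cases hlj : l = j
      · subst hlj; rw [hP'j]; exact Set.disjoint_sdiff_right
      · rw [hP'k l (Ne.symm hkl) hlj]
        exact ((hDU l (Ne.symm hkl) hlj).symm.mono_left hWaU)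
    · by_cases hkj : k = j
      · subst hkj
        rw [hP'j]
        by_cases hli : l = i
        · subst hli; rw [hP'i]; exact Set.disjoint_sdiff_left
        · rw [hP'k l hli (Ne.symm hkl)]
          exact ((hDU l hli (Ne.symm hkl)).symm.mono_left hWbU)
      · rw [hP'k k hki hkj]
        by_cases hli : l = i
        · subst hli; rw [hP'i]; exact (hDU k hki hkj).mono_right hWaU
        · by_cases hlj : l = j
          · subst hlj; rw [hP'j]; exact (hDU k hki hkj).mono_right hWbU
          · rw [hP'k l hli hlj]; exact hdisj k l hkl
  · -- nonempty
    intro k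
    by_cases hki : k = i
    · subst hki; rw [hP'i]; exact ⟨a, haWa⟩
    · by_cases hkj : k = j
      · subst hkj; rw [hP'j]; exact ⟨b, hbWb⟩
      · rw [hP'k k hki hkj]; exact hne k
  · -- connected
    intro k
    by_cases hki : k = i
    · subst hki; rw [hP'i]
      exact StmtAux.conn_Wa G w hpos hUconn ha' hb'
    · by_cases hkj : k = j
      · subst hkj; rw [hP'j]
        exact StmtAux.conn_Wb G w hpos hUconn ha' hb' hab
      · rw [hP'k k hki hkj]; exact hconn k
end
end

section
/- Every pairwise-optimal partition is a centroidal Voronoi partition: if P is a connected N-partition such that for every pair of adjacent regions (i,j), H_one(Cd(P_i); P_i) + H_one(Cd(P_j); P_j) equals the minimum over all pairs (a,b) ∈ (P_i ∪ P_j)² of Σ_{k ∈ P_i∪P_j} min{d_{P_i∪P_j}(a,k), d_{P_i∪P_j}(b,k)} φ(k), then for every i and every x ∈ P_i and every j, d_G(x, Cd(P_i)) ≤ d_G(x, Cd(P_j)). -/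
open scoped Classical ENNReal

noncomputable section

variable {V : Type*}

set_option maxHeartbeats 2000000

@[simp] lemma wlen_nil {w : V → V → ℝ≥0∞} {G : SimpleGraph V} {u : V} :
    wlen w (SimpleGraph.Walk.nil : G.Walk u u) = 0 := by simp [wlen]

@[simp] lemma wlen_cons {w : V → V → ℝ≥0∞} {G : SimpleGraph V} {u v x : V}
    (h : G.Adj u v) (p : G.Walk v x) :
    wlen w (SimpleGraph.Walk.cons h p) = w u v + wlen w p := by
  simp [wlen]

lemma wlen_append {w : V → V → ℝ≥0∞} {G : SimpleGraph V} {u v x : V}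
    (p : G.Walk u v) (q : G.Walk v x) :
    wlen w (p.append q) = wlen w p + wlen w q := by
  simp [wlen, SimpleGraph.Walk.darts_append]

lemma gdist_le {G : SimpleGraph V} {w : V → V → ℝ≥0∞} {u v : V} (p : G.Walk u v) :
    gdist G w u v ≤ wlen w p := iInf_le _ p

@[simp] lemma gdist_self {G : SimpleGraph V} {w : V → V → ℝ≥0∞} {u : V} :
    gdist G w u u = 0 :=
  le_antisymm (by simpa using gdist_le (SimpleGraph.Walk.nil : G.Walk u u)) bot_le

lemma gdist_triangle {G : SimpleGraph V} {w : V → V → ℝ≥0∞} (u v x : V) :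
    gdist G w u x ≤ gdist G w u v + gdist G w v x := by
  have h2 : gdist G w u v + gdist G w v x = ⨅ p : G.Walk u v, (wlen w p + gdist G w v x) := by
    rw [gdist, ENNReal.iInf_add]
  rw [h2]
  refine le_iInf fun p => ?_
  have h3 : wlen w p + gdist G w v x = ⨅ q : G.Walk v x, (wlen w p + wlen w q) := by
    rw [gdist, ENNReal.add_iInf]
  rw [h3]
  refine le_iInf fun q => ?_
  calc gdist G w u x ≤ wlen w (p.append q) := gdist_le _
  _ = wlen w p + wlen w q := wlen_append _ _

lemma gdist_symm {G : SimpleGraph V} {w : V → V → ℝ≥0∞} (hsym : ∀ u v, w u v = w v u)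
    (u v : V) : gdist G w u v = gdist G w v u := by
  have key : ∀ a b : V, gdist G w a b ≤ gdist G w b a := by
    intro a b
    refine le_iInf fun p => ?_
    calc gdist G w a b ≤ wlen w p.reverse := gdist_le _
    _ = wlen w p := by
        simp only [wlen, SimpleGraph.Walk.darts_reverse, List.map_reverse, List.sum_reverse]
        rw [List.map_map]
        exact congr_arg List.sum (List.map_congr_left fun d _ => (hsym _ _).symm)
  exact le_antisymm (key u v) (key v u)

lemma gdist_adj {G : SimpleGraph V} {w : V → V → ℝ≥0∞} {u v : V} (h : G.Adj u v) :
    gdist G w u v ≤ w u v := by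
  simpa using gdist_le (SimpleGraph.Walk.cons h SimpleGraph.Walk.nil)

lemma wlen_lt_top {G : SimpleGraph V} {w : V → V → ℝ≥0∞}
    (hpos : ∀ u v, G.Adj u v → w u v ≠ ⊤) {u v : V} (p : G.Walk u v) :
    wlen w p < ⊤ := by
  induction p with
  | nil => simp
  | cons h p ih =>
      rw [wlen_cons]
      exact ENNReal.add_lt_top.2 ⟨lt_top_iff_ne_top.2 (hpos _ _ h), ih⟩

lemma gdist_lt_top {G : SimpleGraph V} {w : V → V → ℝ≥0∞}
    (hpos : ∀ u v, G.Adj u v → w u v ≠ ⊤) {u v : V} (h : G.Reachable u v) :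
    gdist G w u v < ⊤ := by
  obtain ⟨p⟩ := h
  exact lt_of_le_of_lt (gdist_le p) (wlen_lt_top hpos p)

lemma wlen_dropUntil_le {G : SimpleGraph V} {w : V → V → ℝ≥0∞} {u v x : V}
    (p : G.Walk v x) (h : u ∈ p.support) :
    wlen w (p.dropUntil u h) ≤ wlen w p := by
  conv_rhs => rw [← SimpleGraph.Walk.take_spec p h]
  rw [wlen_append]
  exact le_add_self

lemma wlen_bypass_le {G : SimpleGraph V} {w : V → V → ℝ≥0∞} {u v : V} (p : G.Walk u v) :
    wlen w p.bypass ≤ wlen w p := by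
  induction p with
  | nil => simp [SimpleGraph.Walk.bypass]
  | cons ha p ih =>
      simp only [SimpleGraph.Walk.bypass]
      split_ifs with hs
      · exact le_trans (wlen_dropUntil_le _ hs) (le_trans ih le_add_self)
      · rw [wlen_cons]
        exact add_le_add_right ih _

lemma exists_wlen_eq_gdist [Fintype V] {G : SimpleGraph V} {w : V → V → ℝ≥0∞} {u v : V}
    (h : G.Reachable u v) : ∃ p : G.Walk u v, wlen w p = gdist G w u v := by
  classical
  obtain ⟨p0⟩ := h
  have hne : (Finset.univ : Finset (G.Path u v)).Nonempty := by
    exact ⟨⟨p0.bypass, p0.bypass_isPath⟩, Finset.mem_univ _⟩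
  obtain ⟨q0, -, hq0⟩ := Finset.exists_min_image Finset.univ (fun q : G.Path u v => wlen w q.1) hne
  refine ⟨q0.1, le_antisymm ?_ (gdist_le _)⟩
  refine le_iInf fun p => ?_
  calc wlen w q0.1 ≤ wlen w p.bypass := hq0 ⟨p.bypass, p.bypass_isPath⟩ (Finset.mem_univ _)
  _ ≤ wlen w p := wlen_bypass_le p

lemma gdist_map_le {V₁ V₂ : Type*} {G₁ : SimpleGraph V₁} {G₂ : SimpleGraph V₂}
    (f : G₁ →g G₂) {w₁ : V₁ → V₁ → ℝ≥0∞} {w₂ : V₂ → V₂ → ℝ≥0∞}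
    (hw : ∀ a b, G₁.Adj a b → w₂ (f a) (f b) = w₁ a b) (u v : V₁) :
    gdist G₂ w₂ (f u) (f v) ≤ gdist G₁ w₁ u v := by
  refine le_iInf fun p => ?_
  refine le_trans (gdist_le (p.map f)) (le_of_eq ?_)
  simp only [wlen, SimpleGraph.Walk.darts_map, List.map_map]
  exact congr_arg List.sum (List.map_congr_left fun d hd => hw _ _ d.adj)

lemma dIn_eq {G : SimpleGraph V} {w : V → V → ℝ≥0∞} {A : Set V} {u v : V}
    (hu : u ∈ A) (hv : v ∈ A) :
    dIn G w A u v = sdist G w A ⟨u, hu⟩ ⟨v, hv⟩ := dif_pos ⟨hu, hv⟩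

lemma dIn_self {G : SimpleGraph V} {w : V → V → ℝ≥0∞} {A : Set V} {u : V} (hu : u ∈ A) :
    dIn G w A u u = 0 := by rw [dIn_eq hu hu, sdist, gdist_self]

lemma gdist_le_dIn {G : SimpleGraph V} {w : V → V → ℝ≥0∞} {A : Set V} (u v : V) :
    gdist G w u v ≤ dIn G w A u v := by
  by_cases h : u ∈ A ∧ v ∈ A
  · rw [dIn_eq h.1 h.2, sdist]
    exact gdist_map_le (SimpleGraph.Embedding.induce A).toHom (fun a b _ => rfl) _ _
  · rw [dIn, dif_neg h]; exact le_top

lemma dIn_mono {G : SimpleGraph V} {w : V → V → ℝ≥0∞} {A B : Set V} (hAB : A ⊆ B)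
    (u v : V) : dIn G w B u v ≤ dIn G w A u v := by
  by_cases h : u ∈ A ∧ v ∈ A
  · rw [dIn_eq h.1 h.2, dIn_eq (hAB h.1) (hAB h.2), sdist, sdist]
    exact gdist_map_le (w₂ := fun a b : B => w a.1 b.1)
      (⟨Set.inclusion hAB, fun hab => by simpa using hab⟩ : G.induce A →g G.induce B)
      (fun a b _ => rfl) ⟨u, h.1⟩ ⟨v, h.2⟩
  · rw [show dIn G w A u v = ⊤ from dif_neg h]; exact le_top

lemma dIn_triangle {G : SimpleGraph V} {w : V → V → ℝ≥0∞} {A : Set V} {u v z : V}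
    (hu : u ∈ A) (hv : v ∈ A) (hz : z ∈ A) :
    dIn G w A u z ≤ dIn G w A u v + dIn G w A v z := by
  rw [dIn_eq hu hz, dIn_eq hu hv, dIn_eq hv hz]
  exact gdist_triangle _ _ _

lemma dIn_symm {G : SimpleGraph V} {w : V → V → ℝ≥0∞} (hsym : ∀ u v, w u v = w v u)
    {A : Set V} (u v : V) : dIn G w A u v = dIn G w A v u := by
  by_cases h : u ∈ A ∧ v ∈ A
  · rw [dIn_eq h.1 h.2, dIn_eq h.2 h.1, sdist, sdist]
    exact gdist_symm (fun a b => hsym _ _) _ _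
  · rw [dIn, dif_neg h, dIn, dif_neg (fun hh => h ⟨hh.2, hh.1⟩)]

lemma dIn_adj {G : SimpleGraph V} {w : V → V → ℝ≥0∞} {A : Set V} {u v : V}
    (hu : u ∈ A) (hv : v ∈ A) (h : G.Adj u v) :
    dIn G w A u v ≤ w u v := by
  rw [dIn_eq hu hv, sdist]
  have hadj : (G.induce A).Adj ⟨u, hu⟩ ⟨v, hv⟩ := by simpa using h
  exact gdist_adj hadj

lemma dIn_lt_top {G : SimpleGraph V} {w : V → V → ℝ≥0∞} {A : Set V}
    (hpos : ∀ u v, G.Adj u v → w u v ≠ ⊤) (hconn : (G.induce A).Connected)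
    {u v : V} (hu : u ∈ A) (hv : v ∈ A) :
    dIn G w A u v < ⊤ := by
  rw [dIn_eq hu hv, sdist]
  refine gdist_lt_top ?_ (hconn ⟨u, hu⟩ ⟨v, hv⟩)
  intro a b hab
  exact hpos _ _ (by simpa using hab)

def sF [Fintype V] (A : Set V) : Finset V := Finset.univ.filter (· ∈ A)

lemma mem_sF [Fintype V] {A : Set V} {x : V} : x ∈ sF A ↔ x ∈ A := by simp [sF]

lemma coe_sF [Fintype V] (A : Set V) : (↑(sF A) : Set V) = A := by
  ext x; simp [sF]

lemma sF_union [Fintype V] [DecidableEq V] (A B : Set V) : sF (A ∪ B) = sF A ∪ sF B := by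
  ext x; simp [sF]

lemma sF_disjoint [Fintype V] {A B : Set V} (h : Disjoint A B) :
    Disjoint (sF A) (sF B) := by
  rw [Finset.disjoint_left]
  intro x hx hx'
  rw [mem_sF] at hx hx'
  exact Set.disjoint_left.1 h hx hx'

lemma finsum_mem_set_eq [Fintype V] (A : Set V) (f : V → ℝ≥0∞) :
    ∑ᶠ k ∈ A, f k = ∑ k ∈ sF A, f k := by
  conv_lhs => rw [← coe_sF A]
  rw [finsum_mem_coe_finset]

lemma cd_mem [Fintype V] [LinearOrder V] [Nonempty V] {G : SimpleGraph V}
    {w : V → V → ℝ≥0∞} {φ : V → ℝ≥0∞} {A : Set V} (hA : A.Nonempty) :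
    Cd G w φ A ∈ A := by
  classical
  have hne' : (sF A).Nonempty := by
    obtain ⟨a, ha⟩ := hA
    exact ⟨a, mem_sF.2 ha⟩
  obtain ⟨h0, hh0, hmin⟩ := Finset.exists_min_image (sF A) (HoneV G w φ A) hne'
  have hc : h0 ∈ centerSet G w φ A := by
    refine ⟨mem_sF.1 hh0, fun k hk => hmin k (mem_sF.2 hk)⟩
  have hne2 : (centerSet G w φ A).toFinset.Nonempty := ⟨h0, by rwa [Set.mem_toFinset]⟩
  rw [Cd, dif_pos hne2]
  have := Finset.min'_mem (centerSet G w φ A).toFinset hne2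
  rw [Set.mem_toFinset] at this
  exact this.1

lemma HoneV_ne_top [Fintype V] {G : SimpleGraph V} {w : V → V → ℝ≥0∞}
    (hpos : ∀ u v, G.Adj u v → w u v ≠ ⊤) {φ : V → ℝ≥0∞} (hφ : ∀ k, φ k ≠ ⊤)
    {A : Set V} (hconn : (G.induce A).Connected) {c : V} (hc : c ∈ A) :
    HoneV G w φ A c ≠ ⊤ := by
  rw [HoneV, finsum_mem_set_eq]
  refine (ENNReal.sum_lt_top.2 fun k hk => ?_).ne
  rw [mem_sF] at hk
  exact ENNReal.mul_lt_top (dIn_lt_top hpos hconn hc hk) (lt_top_iff_ne_top.2 (hφ k))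

lemma sum_terms_eq {α : Type*} {s : Finset α} {f g : α → ℝ≥0∞}
    (hle : ∀ a ∈ s, f a ≤ g a) (heq : ∑ a ∈ s, f a = ∑ a ∈ s, g a)
    (hfin : ∑ a ∈ s, g a ≠ ⊤) : ∀ a ∈ s, f a = g a := by
  intro a ha
  refine le_antisymm (hle a ha) ?_
  rw [← Finset.add_sum_erase _ f ha, ← Finset.add_sum_erase _ g ha] at heq
  have hS : ∑ x ∈ s.erase a, f x ≤ ∑ x ∈ s.erase a, g x :=
    Finset.sum_le_sum fun i hi => hle i (Finset.mem_of_mem_erase hi)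
  have hfin2 : g a + ∑ x ∈ s.erase a, g x ≠ ⊤ := by
    rw [← Finset.add_sum_erase _ g ha] at hfin
    exact hfin
  have hfin' : ∑ x ∈ s.erase a, f x ≠ ⊤ :=
    ne_top_of_le_ne_top hfin2 (le_trans hS le_add_self)
  have : g a + ∑ x ∈ s.erase a, f x ≤ f a + ∑ x ∈ s.erase a, f x := by
    calc g a + ∑ x ∈ s.erase a, f x ≤ g a + ∑ x ∈ s.erase a, g x := by
          exact add_le_add_right hS _
    _ = f a + ∑ x ∈ s.erase a, f x := heq.symm
  exact (WithTop.add_le_add_iff_right hfin').1 this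

lemma add_parts_eq {a b c d : ℝ≥0∞} (h : a + b = c + d) (h1 : a ≤ c) (h2 : b ≤ d)
    (hfin : c + d ≠ ⊤) : a = c ∧ b = d := by
  have hd : d ≠ ⊤ := ne_top_of_le_ne_top hfin le_add_self
  have hc : c ≠ ⊤ := ne_top_of_le_ne_top hfin (le_add_of_nonneg_right bot_le)
  have hb : b ≠ ⊤ := ne_top_of_le_ne_top hd h2
  constructor
  · refine le_antisymm h1 ?_
    have : c + b ≤ a + b := by
      calc c + b ≤ c + d := add_le_add_right h2 _
      _ = a + b := h.symm
    exact (WithTop.add_le_add_iff_right hb).1 this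
  · refine le_antisymm h2 ?_
    have : a + d ≤ a + b := by
      calc a + d ≤ c + d := add_le_add_left h1 _
      _ = a + b := h.symm
    exact (WithTop.add_le_add_iff_left (ne_top_of_le_ne_top hc h1)).1 this

lemma key_pair [Fintype V] [LinearOrder V] [Nonempty V] {G : SimpleGraph V}
    {w : V → V → ℝ≥0∞} (hpos : ∀ u v, G.Adj u v → w u v ≠ ⊤)
    {φ : V → ℝ≥0∞} (hφ0 : ∀ k, φ k ≠ 0) (hφt : ∀ k, φ k ≠ ⊤)
    {A B : Set V} (hd : Disjoint A B)
    (hconnA : (G.induce A).Connected) (hconnB : (G.induce B).Connected)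
    (hAne : A.Nonempty) (hBne : B.Nonempty)
    (hpo' : HoneV G w φ A (Cd G w φ A) + HoneV G w φ B (Cd G w φ B) =
      ⨅ (a : (A ∪ B : Set V)) (b : (A ∪ B : Set V)),
        ∑ᶠ k ∈ A ∪ B, min (dIn G w (A ∪ B) (a : V) k) (dIn G w (A ∪ B) (b : V) k) * φ k) :
    ∀ x ∈ A, dIn G w A (Cd G w φ A) x ≤ dIn G w (A ∪ B) (Cd G w φ B) x := by
  classical
  set cA := Cd G w φ A with hcA
  set cB := Cd G w φ B with hcB
  have hcAm : cA ∈ A := cd_mem hAne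
  have hcBm : cB ∈ B := cd_mem hBne
  set m : V → ℝ≥0∞ := fun k => min (dIn G w (A ∪ B) cA k) (dIn G w (A ∪ B) cB k) * φ k with hm
  -- the infimum is at most the value at (cA, cB)
  have h1 : (⨅ (a : (A ∪ B : Set V)) (b : (A ∪ B : Set V)),
      ∑ᶠ k ∈ A ∪ B, min (dIn G w (A ∪ B) (a : V) k) (dIn G w (A ∪ B) (b : V) k) * φ k) ≤
      ∑ k ∈ sF (A ∪ B), m k := by
    have h1' : (⨅ (a : (A ∪ B : Set V)) (b : (A ∪ B : Set V)),
        ∑ᶠ k ∈ A ∪ B, min (dIn G w (A ∪ B) (a : V) k) (dIn G w (A ∪ B) (b : V) k) * φ k) ≤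
        ∑ᶠ k ∈ A ∪ B, min (dIn G w (A ∪ B) cA k) (dIn G w (A ∪ B) cB k) * φ k :=
      iInf_le_of_le (⟨cA, Set.mem_union_left _ hcAm⟩ : (A ∪ B : Set V))
        (iInf_le _ (⟨cB, Set.mem_union_right _ hcBm⟩ : (A ∪ B : Set V)))
    rw [finsum_mem_set_eq] at h1'
    exact h1'
  have hUsplit : sF (A ∪ B) = sF A ∪ sF B := sF_union A B
  have hdisjF : Disjoint (sF A) (sF B) := sF_disjoint hd
  have hsum_split : ∑ k ∈ sF (A ∪ B), m k =
      ∑ k ∈ sF A, m k + ∑ k ∈ sF B, m k := by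
    rw [hUsplit, Finset.sum_union hdisjF]
  have hA_le : ∀ k ∈ sF A, m k ≤ dIn G w A cA k * φ k := by
    intro k _
    refine mul_le_mul_left (le_trans (min_le_left _ _) ?_) _
    exact dIn_mono Set.subset_union_left _ _
  have hB_le : ∀ k ∈ sF B, m k ≤ dIn G w B cB k * φ k := by
    intro k _
    refine mul_le_mul_left (le_trans (min_le_right _ _) ?_) _
    exact dIn_mono Set.subset_union_right _ _
  have hHA : HoneV G w φ A cA = ∑ k ∈ sF A, dIn G w A cA k * φ k :=
    finsum_mem_set_eq _ _
  have hHB : HoneV G w φ B cB = ∑ k ∈ sF B, dIn G w B cB k * φ k :=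
    finsum_mem_set_eq _ _
  have hfinA : HoneV G w φ A cA ≠ ⊤ := HoneV_ne_top hpos hφt hconnA hcAm
  have hfinB : HoneV G w φ B cB ≠ ⊤ := HoneV_ne_top hpos hφt hconnB hcBm
  have hfin : HoneV G w φ A cA + HoneV G w φ B cB ≠ ⊤ :=
    (ENNReal.add_lt_top.2 ⟨lt_top_iff_ne_top.2 hfinA, lt_top_iff_ne_top.2 hfinB⟩).ne
  -- squeeze
  have hchain : ∑ k ∈ sF A, m k + ∑ k ∈ sF B, m k =
      ∑ k ∈ sF A, dIn G w A cA k * φ k + ∑ k ∈ sF B, dIn G w B cB k * φ k := by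
    refine le_antisymm (add_le_add (Finset.sum_le_sum hA_le) (Finset.sum_le_sum hB_le)) ?_
    rw [← hHA, ← hHB, hpo']
    exact le_trans h1 (le_of_eq hsum_split)
  have hparts := add_parts_eq hchain (Finset.sum_le_sum hA_le) (Finset.sum_le_sum hB_le)
    (by rw [← hHA, ← hHB]; exact hfin)
  have hterm := sum_terms_eq hA_le hparts.1 (by rw [← hHA]; exact hfinA)
  intro x hx
  have hx' : x ∈ sF A := mem_sF.2 hx
  have hmx := hterm x hx'
  -- m x = dIn A cA x * φ x, and m x ≤ dIn U cB x * φ x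
  have h2 : dIn G w A cA x * φ x ≤ dIn G w (A ∪ B) cB x * φ x := by
    rw [← hmx, hm]
    exact mul_le_mul_left (min_le_right _ _) _
  exact (ENNReal.mul_le_mul_iff_left (hφ0 x) (hφt x)).1 h2


/-- Every pairwise-optimal partition is a centroidal Voronoi partition. -/
theorem stmt9 [Fintype V] [LinearOrder V] [Nonempty V] (G : SimpleGraph V) (hG : G.Connected)
    (w : V → V → ℝ≥0∞) (hsym : ∀ u v, w u v = w v u)
    (hpos : ∀ u v, G.Adj u v → 0 < w u v ∧ w u v ≠ ⊤)
    (φ : V → ℝ≥0∞) (hφ : ∀ k, 0 < φ k ∧ φ k ≠ ⊤)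
    (N : ℕ) (P : Fin N → Set V)
    (hcover : (⋃ i, P i) = Set.univ)
    (hdisj : ∀ i j, i ≠ j → Disjoint (P i) (P j))
    (hne : ∀ i, (P i).Nonempty)
    (hconn : ∀ i, (G.induce (P i)).Connected)
    (hpo : ∀ i j, i ≠ j → (∃ qi ∈ P i, ∃ qj ∈ P j, G.Adj qi qj) →
      HoneV G w φ (P i) (Cd G w φ (P i)) + HoneV G w φ (P j) (Cd G w φ (P j)) =
        ⨅ (a : (P i ∪ P j : Set V)) (b : (P i ∪ P j : Set V)),
          ∑ᶠ k ∈ P i ∪ P j,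
            min (dIn G w (P i ∪ P j) (a : V) k) (dIn G w (P i ∪ P j) (b : V) k) * φ k) :
    ∀ i, ∀ x ∈ P i, ∀ j,
      gdist G w x (Cd G w φ (P i)) ≤ gdist G w x (Cd G w φ (P j)) := by
  classical
  intro i x hx j
  have hwt : ∀ u v, G.Adj u v → w u v ≠ ⊤ := fun u v h => (hpos u v h).2
  set c : Fin N → V := fun t => Cd G w φ (P t) with hc
  have hcm : ∀ t, c t ∈ P t := fun t => cd_mem (hne t)
  -- region index function
  have hidx0 : ∀ v : V, ∃ t, v ∈ P t := by
    intro v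
    have hv : v ∈ ⋃ t, P t := by rw [hcover]; exact Set.mem_univ v
    simpa [Set.mem_iUnion] using hv
  choose idx hidxm using hidx0
  have huniq : ∀ {t : Fin N} {v : V}, v ∈ P t → idx v = t := by
    intro t v hv
    by_contra hne'
    exact Set.disjoint_left.1 (hdisj _ _ hne') (hidxm v) hv
  have hNne : Nonempty (Fin N) := ⟨i⟩
  set ρ : V → ℝ≥0∞ := fun v => ⨅ t : Fin N, gdist G w v (c t) with hρ
  have hρ_le : ∀ v t, ρ v ≤ gdist G w v (c t) := fun v t => iInf_le _ t
  have hρ_att : ∀ v : V, ∃ t, ρ v = gdist G w v (c t) := by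
    intro v
    obtain ⟨t0, -, hmin⟩ := Finset.exists_min_image Finset.univ
      (fun t : Fin N => gdist G w v (c t)) Finset.univ_nonempty
    exact ⟨t0, le_antisymm (hρ_le v t0) (le_iInf fun t => hmin t (Finset.mem_univ t))⟩
  have hρ_top : ∀ v, ρ v ≠ ⊤ := fun v =>
    (lt_of_le_of_lt (hρ_le v i) (gdist_lt_top hwt (hG.preconnected v (c i)))).ne
  set Good : V → Prop := fun v =>
    gdist G w v (c (idx v)) = ρ v ∧ dIn G w (P (idx v)) v (c (idx v)) = ρ v with hGood
  have main : ∀ v, Good v := by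
    by_contra hbad
    push_neg at hbad
    obtain ⟨x0, hx0⟩ := hbad
    obtain ⟨z, hzmem, hzmin⟩ := Finset.exists_min_image
      (Finset.univ.filter fun v => ¬ Good v) ρ ⟨x0, by simp [hx0]⟩
    have hznotgood : ¬ Good z := (Finset.mem_filter.1 hzmem).2
    have hIH : ∀ y : V, ρ y < ρ z → Good y := by
      intro y hy
      by_contra hny
      exact absurd (hzmin y (Finset.mem_filter.2 ⟨Finset.mem_univ y, hny⟩)) (not_le.2 hy)
    refine hznotgood ?_
    have hshow : (gdist G w z (c (idx z)) = ρ z ∧ dIn G w (P (idx z)) z (c (idx z)) = ρ z) → Good z := fun h => h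
    refine hshow ?_
    obtain ⟨jz, hjz⟩ := hρ_att z
    set iz := idx z with hiz
    have hziz : z ∈ P iz := hidxm z
    by_cases hzc : z = c jz
    · -- z is the centroid c jz itself
      have hjz' : iz = jz := by rw [hiz]; exact huniq (hzc ▸ hcm jz)
      have h0 : gdist G w z (c iz) = 0 := by rw [hjz', ← hzc]; exact gdist_self
      have hρ0 : ρ z = 0 := le_antisymm (h0 ▸ hρ_le z iz) bot_le
      constructor
      · rw [h0, hρ0]
      · rw [hρ0, hjz', ← hzc]; exact dIn_self (hjz' ▸ hziz)
    · -- take a shortest walk from z to c jz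
      obtain ⟨p, hp⟩ := exists_wlen_eq_gdist (w := w) (hG.preconnected z (c jz))
      cases p with
      | nil => exact absurd rfl hzc
      | cons hadj q =>
        rename_i y
        -- hadj : G.Adj z y, q : walk from y to c jz
        have hlen : w z y + wlen w q = ρ z := by rw [← hjz] at hp; rw [← hp, wlen_cons]
        have hwq_top : wlen w q ≠ ⊤ := by
          intro htop
          rw [htop, add_top] at hlen
          exact hρ_top z hlen.symm
        have hρy_le : ρ y ≤ wlen w q := le_trans (hρ_le y jz) (gdist_le q)
        have hρy_lt : ρ y < ρ z := by
          refine lt_of_le_of_lt hρy_le ?_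
          rw [← hlen]
          rw [add_comm]
          exact ENNReal.lt_add_right hwq_top (hpos _ _ hadj).1.ne'
        obtain ⟨hy1, hy2⟩ := hIH y hρy_lt
        set ky := idx y with hky
        have hyky : y ∈ P ky := hidxm y
        have hwzy : w z y + ρ y ≤ ρ z := by
          rw [← hlen]; exact add_le_add_right hρy_le _
        by_cases hk : ky = iz
        · -- same region
          rw [hk] at hy1 hy2 hyky
          have hub : gdist G w z (c iz) ≤ ρ z := by
            calc gdist G w z (c iz) ≤ gdist G w z y + gdist G w y (c iz) :=
                  gdist_triangle _ _ _
            _ ≤ w z y + ρ y := add_le_add (gdist_adj hadj) (le_of_eq hy1)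
            _ ≤ ρ z := hwzy
          have h1 : gdist G w z (c iz) = ρ z := le_antisymm hub (hρ_le z iz)
          refine ⟨h1, le_antisymm ?_ ?_⟩
          · calc dIn G w (P iz) z (c iz) ≤
                dIn G w (P iz) z y + dIn G w (P iz) y (c iz) :=
                  dIn_triangle hziz hyky (hcm iz)
            _ ≤ w z y + ρ y := add_le_add (dIn_adj hziz hyky hadj) (le_of_eq hy2)
            _ ≤ ρ z := hwzy
          · rw [← h1]; exact gdist_le_dIn _ _
        · -- adjacent distinct regions iz and ky
          have hik : iz ≠ ky := fun h => hk h.symm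
          have hkey := key_pair (G := G) hwt (fun k => (hφ k).1.ne') (fun k => (hφ k).2)
            (hdisj iz ky hik) (hconn iz) (hconn ky) (hne iz) (hne ky)
            (hpo iz ky hik ⟨z, hziz, y, hyky, hadj⟩) z hziz
          have hub2 : dIn G w (P iz) (c iz) z ≤ ρ z := by
            have hzU : z ∈ P iz ∪ P ky := Set.mem_union_left _ hziz
            have hyU : y ∈ P iz ∪ P ky := Set.mem_union_right _ hyky
            have hcU : c ky ∈ P iz ∪ P ky := Set.mem_union_right _ (hcm ky)
            calc dIn G w (P iz) (c iz) z ≤ dIn G w (P iz ∪ P ky) (c ky) z := hkey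
            _ ≤ dIn G w (P iz ∪ P ky) (c ky) y + dIn G w (P iz ∪ P ky) y z :=
                  dIn_triangle hcU hyU hzU
            _ ≤ ρ y + w z y := by
                  refine add_le_add ?_ ?_
                  · calc dIn G w (P iz ∪ P ky) (c ky) y ≤ dIn G w (P ky) (c ky) y :=
                          dIn_mono Set.subset_union_right _ _
                    _ = dIn G w (P ky) y (c ky) := dIn_symm hsym _ _
                    _ = ρ y := hy2
                  · calc dIn G w (P iz ∪ P ky) y z ≤ w y z := dIn_adj hyU hzU hadj.symm
                    _ = w z y := (hsym z y).symm
            _ = w z y + ρ y := add_comm _ _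
            _ ≤ ρ z := hwzy
          have h1 : gdist G w z (c iz) = ρ z := by
            refine le_antisymm ?_ (hρ_le z iz)
            calc gdist G w z (c iz) ≤ dIn G w (P iz) z (c iz) := gdist_le_dIn _ _
            _ = dIn G w (P iz) (c iz) z := dIn_symm hsym _ _
            _ ≤ ρ z := hub2
          refine ⟨h1, le_antisymm ?_ ?_⟩
          · calc dIn G w (P iz) z (c iz) = dIn G w (P iz) (c iz) z := dIn_symm hsym _ _
            _ ≤ ρ z := hub2
          · rw [← h1]; exact gdist_le_dIn _ _
  obtain ⟨h1, -⟩ := main x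
  have hxi : idx x = i := huniq hx
  rw [hxi] at h1
  calc gdist G w x (c i) = ρ x := h1
  _ ≤ gdist G w x (c j) := hρ_le x j
end
end

section
/- Persistent random switches imply finite-time convergence: let X be a finite set, T_1,...,T_m : X → X maps, W ⊆ X strongly positively invariant for all T_i, and U : W → ℝ a function with U(T_i(w)) < U(w) whenever T_i(w) ≠ w. Let σ : ℕ → {1,...,m} be a stochastic process such that there exist p ∈ (0,1) and k ∈ ℕ with: for all i and n there exists h ∈ {1,...,k} such that P[σ(n+h) = i | σ(n),...,σ(1)] ≥ p. Then the evolution x_{n+1} = T_{σ(n)}(x_n) with x_0 ∈ W almost surely reaches, in finite time, a point x̄ that is a common fixed point of all T_i, and stays there forever. -/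
open scoped Classical ENNReal

noncomputable section

variable {V : Type*}

section PRSAux
open MeasureTheory
noncomputable section AuxPRS

variable {Ω : Type*} [MeasurableSpace Ω] {μ : Measure Ω} {m : ℕ}

lemma prs_cyl_meas (σ : ℕ → Ω → Fin m) (hmeas : ∀ n, Measurable (σ n))
    (n : ℕ) (s : Fin n → Fin m) :
    MeasurableSet {ω | ∀ t : Fin n, σ ((t : ℕ) + 1) ω = s t} := by
  have h : {ω | ∀ t : Fin n, σ ((t : ℕ) + 1) ω = s t}
      = ⋂ t : Fin n, (σ ((t : ℕ) + 1)) ⁻¹' {s t} := by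
    ext ω; simp [Set.mem_iInter]
  rw [h]
  exact MeasurableSet.iInter fun t => (hmeas _) (measurableSet_singleton _)

lemma prs_inter_eq_sum (σ : ℕ → Ω → Fin m) (hmeas : ∀ n, Measurable (σ n))
    (n : ℕ) (Q : (Fin n → Fin m) → Prop) (E : Set Ω) (hE : MeasurableSet E) :
    μ (E ∩ {ω | Q (fun t : Fin n => σ ((t : ℕ) + 1) ω)}) =
      ∑ s ∈ Finset.univ.filter Q, μ (E ∩ {ω | ∀ t : Fin n, σ ((t : ℕ) + 1) ω = s t}) := by
  classical
  rw [← measure_biUnion_finset]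
  · congr 1
    ext ω
    simp only [Set.mem_iUnion, Finset.mem_filter, Finset.mem_univ, true_and,
      Set.mem_inter_iff, Set.mem_setOf_eq]
    constructor
    · rintro ⟨hE, hQ⟩
      exact ⟨fun t => σ ((t : ℕ) + 1) ω, hQ, hE, fun t => rfl⟩
    · rintro ⟨s, hQ, hE, hs⟩
      refine ⟨hE, ?_⟩
      have : (fun t : Fin n => σ ((t : ℕ) + 1) ω) = s := funext hs
      rw [this]; exact hQ
  · intro s hs s' hs' hne
    simp only [Function.onFun, Set.disjoint_left]
    rintro ω ⟨-, h1⟩ ⟨-, h2⟩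
    exact hne (funext fun t => (h1 t).symm.trans (h2 t))
  · intro s hs
    exact hE.inter (prs_cyl_meas σ hmeas n s)

/-- the key conditional-probability step, packaged. -/
lemma prs_step (μ : Measure Ω) (σ : ℕ → Ω → Fin m) (hmeas : ∀ n, Measurable (σ n))
    (p : ℝ≥0∞) (n h : ℕ) (i : Fin m)
    (hP : ∀ s : Fin n → Fin m,
        p * μ {ω | ∀ t : Fin n, σ ((t : ℕ) + 1) ω = s t} ≤
          μ ({ω | σ (n + h) ω = i} ∩ {ω | ∀ t : Fin n, σ ((t : ℕ) + 1) ω = s t}))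
    (Q : (Fin n → Fin m) → Prop) :
    p * μ {ω | Q (fun t : Fin n => σ ((t : ℕ) + 1) ω)} ≤
      μ ({ω | σ (n + h) ω = i} ∩ {ω | Q (fun t : Fin n => σ ((t : ℕ) + 1) ω)}) := by
  classical
  have h1 := prs_inter_eq_sum (μ := μ) σ hmeas n Q Set.univ MeasurableSet.univ
  have h2 := prs_inter_eq_sum (μ := μ) σ hmeas n Q {ω | σ (n + h) ω = i} ((hmeas _) (measurableSet_singleton _))
  simp only [Set.univ_inter] at h1
  rw [h1, h2, Finset.mul_sum]
  apply Finset.sum_le_sum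
  intro s _
  exact hP s

end AuxPRS

section Zero
open MeasureTheory
variable {Ω : Type*} [MeasurableSpace Ω]

lemma prs_zero {m : ℕ} (μ : Measure Ω) [IsProbabilityMeasure μ]
    (σ : ℕ → Ω → Fin m) (hmeas : ∀ n, Measurable (σ n))
    (p : ℝ≥0∞) (hp0 : 0 < p) (hp1 : p < 1)
    (i : Fin m)
    (hpers : ∀ n : ℕ, ∃ h, 1 ≤ h ∧
      ∀ s : Fin n → Fin m,
        p * μ {ω | ∀ t : Fin n, σ ((t : ℕ) + 1) ω = s t} ≤
          μ ({ω | σ (n + h) ω = i} ∩ {ω | ∀ t : Fin n, σ ((t : ℕ) + 1) ω = s t}))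
    (N : ℕ) :
    μ {ω | ∀ n ≥ N, σ n ω ≠ i} = 0 := by
  classical
  set hf : ℕ → ℕ := fun n => (hpers n).choose with hhf
  have hf1 : ∀ n, 1 ≤ hf n := fun n => (hpers n).choose_spec.1
  have hfP : ∀ n, ∀ s : Fin n → Fin m,
      p * μ {ω | ∀ t : Fin n, σ ((t : ℕ) + 1) ω = s t} ≤
        μ ({ω | σ (n + hf n) ω = i} ∩ {ω | ∀ t : Fin n, σ ((t : ℕ) + 1) ω = s t}) :=
    fun n => (hpers n).choose_spec.2
  -- times
  set t : ℕ → ℕ := fun r => Nat.rec N (fun _ prev => prev + hf prev) r with hht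
  have ht0 : t 0 = N := rfl
  have htS : ∀ r, t (r + 1) = t r + hf (t r) := fun r => rfl
  have htge : ∀ r, N + r ≤ t r := by
    intro r
    induction r with
    | zero => simp [ht0]
    | succ r ih =>
      rw [htS]
      have := hf1 (t r)
      omega
  have htmono : ∀ r s, r ≤ s → t r ≤ t s := by
    intro r s hrs
    induction s with
    | zero => have : r = 0 := by omega
              subst this; exact le_rfl
    | succ s ih =>
      rcases Nat.lt_or_ge r (s+1) with h | h
      · have := ih (by omega)
        rw [htS]; omega
      · have : r = s + 1 := by omega
        subst this; rfl
  -- the decreasing events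
  set B : ℕ → Set Ω := fun r => {ω | ∀ s, 1 ≤ s → s ≤ r → σ (t s) ω ≠ i} with hB
  have hBmeas : ∀ r, MeasurableSet (B r) := by
    intro r
    have : B r = ⋂ (s : ℕ) (_ : 1 ≤ s) (_ : s ≤ r), (σ (t s)) ⁻¹' {i}ᶜ := by
      ext ω; simp [hB, Set.mem_iInter]
    rw [this]
    exact MeasurableSet.iInter fun s => MeasurableSet.iInter fun _ =>
      MeasurableSet.iInter fun _ => (hmeas _) (measurableSet_singleton i).compl
  -- B r as cylinder event at level t r
  have hts_pos : ∀ s, 1 ≤ s → 1 ≤ t s := by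
    intro s hs; have := htge s; omega
  have hQ : ∀ r, ∃ Q : (Fin (t r) → Fin m) → Prop,
      B r = {ω | Q (fun u : Fin (t r) => σ ((u : ℕ) + 1) ω)} := by
    intro r
    refine ⟨fun f => ∀ s (h1 : 1 ≤ s) (h2 : s ≤ r),
      f ⟨t s - 1, by have := htmono s r h2; have := hts_pos s h1; omega⟩ ≠ i, ?_⟩
    ext ω
    simp only [hB, Set.mem_setOf_eq]
    constructor
    · intro hω s h1 h2
      have hts := hts_pos s h1
      have : t s - 1 + 1 = t s := by omega
      rw [this]
      exact hω s h1 h2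
    · intro hω s h1 h2
      have hts := hts_pos s h1
      have heq : t s - 1 + 1 = t s := by omega
      have := hω s h1 h2
      rwa [heq] at this
  -- step inequality
  have hstep : ∀ r, μ (B (r + 1)) ≤ (1 - p) * μ (B r) := by
    intro r
    obtain ⟨Q, hQr⟩ := hQ r
    have hkey : p * μ (B r) ≤ μ ({ω | σ (t r + hf (t r)) ω = i} ∩ B r) := by
      rw [hQr]
      exact prs_step μ σ hmeas p (t r) (hf (t r)) i (hfP (t r)) Q
    have hsub : B (r + 1) = B r \ ({ω | σ (t (r + 1)) ω = i} ∩ B r) := by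
      ext ω
      simp only [hB, Set.mem_setOf_eq, Set.mem_diff, Set.mem_inter_iff, not_and]
      constructor
      · intro hω
        refine ⟨fun s h1 h2 => hω s h1 (by omega), fun hi => absurd hi (hω (r+1) (by omega) le_rfl)⟩
      · rintro ⟨hω, hni⟩ s h1 h2
        rcases Nat.lt_or_ge s (r + 1) with h | h
        · exact hω s h1 (by omega)
        · have : s = r + 1 := by omega
          subst this
          intro hi
          exact hni hi hω
    have hmeasI : MeasurableSet ({ω | σ (t (r + 1)) ω = i} ∩ B r) :=
      ((hmeas _) (measurableSet_singleton i)).inter (hBmeas r)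
    have hfin : μ ({ω | σ (t (r + 1)) ω = i} ∩ B r) ≠ ⊤ := measure_ne_top μ _
    rw [hsub, measure_diff Set.inter_subset_right hmeasI.nullMeasurableSet hfin]
    have h1 : μ (B r) - μ ({ω | σ (t (r + 1)) ω = i} ∩ B r) ≤ μ (B r) - p * μ (B r) := by
      apply tsub_le_tsub_left
      rw [htS]
      exact hkey
    refine h1.trans ?_
    rw [ENNReal.sub_mul (fun _ _ => measure_ne_top μ _)]
    simp
  -- geometric bound
  have hbound : ∀ r, μ (B r) ≤ (1 - p) ^ r := by
    intro r
    induction r with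
    | zero => simp [hB]; exact measure_mono (Set.subset_univ _) |>.trans (by simp)
    | succ r ih =>
      calc μ (B (r + 1)) ≤ (1 - p) * μ (B r) := hstep r
        _ ≤ (1 - p) * (1 - p) ^ r := by exact mul_le_mul_right ih _
        _ = (1 - p) ^ (r + 1) := by ring
  -- target ⊆ every B r
  have hsubset : {ω | ∀ n ≥ N, σ n ω ≠ i} ⊆ ⋂ r, B r := by
    intro ω hω
    simp only [Set.mem_iInter]
    intro r s h1 h2
    exact hω (t s) (by have := htge s; omega)
  have hlim : Filter.Tendsto (fun r => (1 - p) ^ r) Filter.atTop (nhds 0) := by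
    apply ENNReal.tendsto_pow_atTop_nhds_zero_of_lt_one
    exact ENNReal.sub_lt_self ENNReal.one_ne_top one_ne_zero hp0.ne'
  have : μ {ω | ∀ n ≥ N, σ n ω ≠ i} ≤ 0 := by
    refine ge_of_tendsto' hlim fun r => ?_
    calc μ {ω | ∀ n ≥ N, σ n ω ≠ i} ≤ μ (B r) :=
          measure_mono (hsubset.trans (Set.iInter_subset _ r))
      _ ≤ (1 - p) ^ r := hbound r
  exact le_antisymm this zero_le

end Zero

section Det

lemma prs_event_const {X : Type*} [Finite X] (r : ℕ → X) (U : X → ℝ)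
    (hmono : ∀ n, U (r (n + 1)) ≤ U (r n))
    (hstep : ∀ n, U (r (n + 1)) = U (r n) → r (n + 1) = r n) :
    ∃ τ, ∀ n ≥ τ, r n = r τ := by
  classical
  have hfin : (Set.range fun n => U (r n)).Finite := by
    have : (Set.range fun n => U (r n)) ⊆ U '' (Set.range r) := by
      rintro _ ⟨n, rfl⟩; exact ⟨r n, Set.mem_range_self n, rfl⟩
    exact ((Set.toFinite (Set.range r)).image U).subset this
  have hne : hfin.toFinset.Nonempty :=
    ⟨U (r 0), by rw [Set.Finite.mem_toFinset]; exact ⟨0, rfl⟩⟩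
  obtain ⟨n0, hn0⟩ : ∃ n0, U (r n0) = hfin.toFinset.min' hne := by
    have : hfin.toFinset.min' hne ∈ hfin.toFinset := hfin.toFinset.min'_mem hne
    rw [Set.Finite.mem_toFinset] at this
    obtain ⟨n0, hn0⟩ := this
    exact ⟨n0, hn0⟩
  have hminle : ∀ n, U (r n0) ≤ U (r n) := by
    intro n
    rw [hn0]
    exact hfin.toFinset.min'_le _ (by rw [Set.Finite.mem_toFinset]; exact ⟨n, rfl⟩)
  refine ⟨n0, ?_⟩
  intro n hn
  induction n, hn using Nat.le_induction with
  | base => rfl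
  | succ n hn ih =>
    have h1 : U (r (n + 1)) ≤ U (r n) := hmono n
    have h2 : U (r n) = U (r n0) := by rw [ih]
    have h3 : U (r (n + 1)) = U (r n) := le_antisymm h1 (h2 ▸ hminle (n + 1))
    rw [hstep n h3, ih]

end Det
end PRSAux

open MeasureTheory in
/-- Persistent random switches imply almost-sure finite-time convergence to a
common fixed point. -/
theorem stmt11 {X : Type*} [Finite X] {m : ℕ} (T : Fin m → X → X) (W : Set X)
    (hW : ∀ i, ∀ x ∈ W, T i x ∈ W)
    (U : X → ℝ) (hU : ∀ i, ∀ x ∈ W, T i x ≠ x → U (T i x) < U x)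
    {Ω : Type*} [MeasurableSpace Ω] (μ : Measure Ω) [IsProbabilityMeasure μ]
    (σ : ℕ → Ω → Fin m) (hmeas : ∀ n, Measurable (σ n))
    (p : ℝ≥0∞) (hp0 : 0 < p) (hp1 : p < 1) (k : ℕ) (hk : 0 < k)
    (hpers : ∀ (i : Fin m) (n : ℕ), ∃ h, 1 ≤ h ∧ h ≤ k ∧
      ∀ s : Fin n → Fin m,
        p * μ {ω | ∀ t : Fin n, σ ((t : ℕ) + 1) ω = s t} ≤
          μ ({ω | σ (n + h) ω = i} ∩ {ω | ∀ t : Fin n, σ ((t : ℕ) + 1) ω = s t}))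
    (x0 : X) (hx0 : x0 ∈ W)
    (x : ℕ → Ω → X) (hxinit : ∀ ω, x 0 ω = x0)
    (hxstep : ∀ n ω, x (n + 1) ω = T (σ n ω) (x n ω)) :
    μ {ω | ∃ τ : ℕ, ∃ xb ∈ W, (∀ i, T i xb = xb) ∧ ∀ n ≥ τ, x n ω = xb} = 1 := by
  classical
  set Bad : Set Ω := ⋃ (i : Fin m), ⋃ (N : ℕ), {ω | ∀ n ≥ N, σ n ω ≠ i} with hBad
  have hBad0 : μ Bad = 0 := by
    apply measure_iUnion_null; intro i
    apply measure_iUnion_null; intro N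
    exact prs_zero μ σ hmeas p hp0 hp1 i
      (fun n => by obtain ⟨h, h1, _, h3⟩ := hpers i n; exact ⟨h, h1, h3⟩) N
  set Target : Set Ω :=
    {ω | ∃ τ : ℕ, ∃ xb ∈ W, (∀ i, T i xb = xb) ∧ ∀ n ≥ τ, x n ω = xb} with hT
  have hsub : Badᶜ ⊆ Target := by
    intro ω hω
    have hgood : ∀ (i : Fin m) (N : ℕ), ∃ n ≥ N, σ n ω = i := by
      intro i N
      by_contra hc
      push_neg at hc
      apply hω
      simp only [hBad, Set.mem_iUnion, Set.mem_setOf_eq]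
      exact ⟨i, N, fun n hn => hc n hn⟩
    have hxW : ∀ n, x n ω ∈ W := by
      intro n
      induction n with
      | zero => rw [hxinit]; exact hx0
      | succ n ih => rw [hxstep]; exact hW _ _ ih
    have hmono : ∀ n, U (x (n + 1) ω) ≤ U (x n ω) := by
      intro n
      rw [hxstep]
      by_cases h : T (σ n ω) (x n ω) = x n ω
      · rw [h]
      · exact (hU _ _ (hxW n) h).le
    have hst : ∀ n, U (x (n + 1) ω) = U (x n ω) → x (n + 1) ω = x n ω := by
      intro n h
      rw [hxstep] at h ⊢
      by_contra hc
      exact absurd h (ne_of_lt (hU _ _ (hxW n) hc))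
    obtain ⟨τ, hτ⟩ := prs_event_const (fun n => x n ω) U hmono hst
    refine ⟨τ, x τ ω, hxW τ, ?_, hτ⟩
    intro i
    obtain ⟨n, hn, hi⟩ := hgood i τ
    calc T i (x τ ω) = T (σ n ω) (x n ω) := by rw [hi, hτ n hn]
      _ = x (n + 1) ω := (hxstep n ω).symm
      _ = x τ ω := hτ (n + 1) (by omega)
  have h1 : (1 : ℝ≥0∞) ≤ μ Target := by
    have huniv : (Set.univ : Set Ω) ⊆ Bad ∪ Target := by
      intro ω _
      by_cases h : ω ∈ Bad
      · exact Or.inl h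
      · exact Or.inr (hsub h)
    calc (1 : ℝ≥0∞) = μ Set.univ := (measure_univ).symm
      _ ≤ μ (Bad ∪ Target) := measure_mono huniv
      _ ≤ μ Bad + μ Target := measure_union_le _ _
      _ = μ Target := by rw [hBad0, zero_add]
  exact le_antisymm prob_le_one h1
end
end
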